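/- Let s, t > 1 be coprime integers and define ε : ℕ → ℤ by ε(m) = −1 if m ≡ st+s+t or st−s−t (mod 2st), ε(m) = +1 if m ≡ st+s−t or st−s+t (mod 2st), and 0 otherwise. Then, as formal power series in z, (z^{2st} − 1) · ∑_{m ≥ 1} ε(m) zᵐ = z^{st−s−t}(1 − z^{2s})(1 − z^{2t}). -/

import Mathlib

open PowerSeries

/-- The torus-knot sign sequence for coprime `s, t > 1`:
`ε(m) = −1` if `m ≡ st+s+t` or `st−s−t (mod 2st)`,
`ε(m) = +1` if `m ≡ st+s−t` or `st−s+t (mod 2st)`, and `0` otherwise. -/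
def torusEps (s t m : ℕ) : ℤ :=
  if m % (2*s*t) = (s*t + s + t) % (2*s*t) ∨ m % (2*s*t) = (s*t - s - t) % (2*s*t) then -1
  else if m % (2*s*t) = (s*t + s - t) % (2*s*t) ∨ m % (2*s*t) = (s*t - s + t) % (2*s*t) then 1
  else 0

/-- For coprime `s, t > 1`, as formal power series in `z`,
`(z^{2st} − 1) · ∑_{m ≥ 1} ε(m) zᵐ = z^{st−s−t}(1 − z^{2s})(1 − z^{2t})`. -/
theorem torus_eps_generating_function (s t : ℕ) (hs : 1 < s) (ht : 1 < t)
    (hst : Nat.Coprime s t) :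
    ((X : PowerSeries ℤ) ^ (2*s*t) - 1) * PowerSeries.mk (fun m => torusEps s t m)
      = X ^ (s*t - s - t) * ((1 - X ^ (2*s)) * (1 - X ^ (2*t))) := by
  have hne : s ≠ t := by
    rintro rfl
    simp [Nat.Coprime] at hst
    omega
  have hassoc : 2*s*t = 2*(s*t) := by ring
  -- key linear bound: s + t + 1 ≤ s * t
  have hP : s + t + 1 ≤ s * t := by
    rcases Nat.lt_or_ge s t with h | h
    · have h2 : 2*t ≤ s*t := Nat.mul_le_mul_right t hs
      omega
    · have h2 : s*2 ≤ s*t := Nat.mul_le_mul_left s ht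
      have h3 : s*2 = 2*s := by ring
      omega
  have hRHS : (X : PowerSeries ℤ) ^ (s*t - s - t) * ((1 - X ^ (2*s)) * (1 - X ^ (2*t)))
      = X ^ (s*t - s - t) - X ^ (s*t + s - t) - X ^ (s*t - s + t) + X ^ (s*t + s + t) := by
    obtain ⟨P, hPe⟩ : ∃ P, s*t = P := ⟨_, rfl⟩
    rw [hPe] at hP ⊢
    have h1 : P - s - t + 2*s = P + s - t := by omega
    have h2 : P - s - t + 2*t = P - s + t := by omega
    have h3 : P - s - t + (2*s + 2*t) = P + s + t := by omega
    rw [← h1, ← h2, ← h3, pow_add, pow_add, pow_add, pow_add]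
    ring
  rw [hRHS]
  ext n
  have hc : (coeff n) (((X : PowerSeries ℤ) ^ (2*s*t) - 1) * PowerSeries.mk (fun m => torusEps s t m))
      = (if 2*s*t ≤ n then torusEps s t (n - 2*s*t) else 0) - torusEps s t n := by
    rw [sub_mul, one_mul, map_sub, coeff_X_pow_mul', coeff_mk]
    simp [coeff_mk]
  rw [hc]
  simp only [map_add, map_sub, coeff_X_pow]
  rcases Nat.lt_or_ge n (2*s*t) with hn | hn
  · rw [if_neg (not_le.mpr hn)]
    unfold torusEps
    rw [hassoc] at hn ⊢
    obtain ⟨P, hPe⟩ : ∃ P, s*t = P := ⟨_, rfl⟩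
    rw [hPe] at hn hP ⊢
    have e0 : n % (2*P) = n := Nat.mod_eq_of_lt hn
    have e1 : (P + s + t) % (2*P) = P + s + t := Nat.mod_eq_of_lt (by omega)
    have e2 : (P - s - t) % (2*P) = P - s - t := Nat.mod_eq_of_lt (by omega)
    have e3 : (P + s - t) % (2*P) = P + s - t := Nat.mod_eq_of_lt (by omega)
    have e4 : (P - s + t) % (2*P) = P - s + t := Nat.mod_eq_of_lt (by omega)
    rw [e0, e1, e2, e3, e4]
    split_ifs <;> omega
  · rw [if_pos hn]
    unfold torusEps
    rw [hassoc] at hn ⊢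
    obtain ⟨P, hPe⟩ : ∃ P, s*t = P := ⟨_, rfl⟩
    rw [hPe] at hn hP ⊢
    have key : (n - 2*P) % (2*P) = n % (2*P) := (Nat.mod_eq_sub_mod hn).symm
    rw [key]
    have h1 : n ≠ P - s - t := by omega
    have h2 : n ≠ P + s - t := by omega
    have h3 : n ≠ P - s + t := by omega
    have h4 : n ≠ P + s + t := by omega
    rw [if_neg h1, if_neg h2, if_neg h3, if_neg h4]
    split_ifs <;> ring
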